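/- For any finite-dimensional vector space V equipped with two exhaustive decreasing filtrations F₁ and F₂, there exists a bigrading V = ⊕_{p,q} V^{p,q} compatible with both filtrations, i.e. F₁^p = ⊕_{a ≥ p, q} V^{a,q} and F₂^q = ⊕_{p, b ≥ q} V^{p,b} for all p, q. -/

import Mathlib

open Submodule

/-- For any finite-dimensional vector space with two exhaustive decreasing filtrations
`F₁`, `F₂`, there exists a bigrading `V = ⊕_{p,q} V^{p,q}` compatible with both
filtrations: `F₁^p = ⊕_{a ≥ p, q} V^{a,q}` and `F₂^q = ⊕_{p, b ≥ q} V^{p,b}`. -/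
theorem exists_compatible_bigrading
    {k V : Type*} [Field k] [AddCommGroup V] [Module k V] [FiniteDimensional k V]
    (F₁ F₂ : ℤ → Submodule k V)
    (h₁ : ∀ p q : ℤ, p ≤ q → F₁ q ≤ F₁ p) (h₂ : ∀ p q : ℤ, p ≤ q → F₂ q ≤ F₂ p)
    (h₁top : ∃ a : ℤ, F₁ a = ⊤) (h₁bot : ∃ b : ℤ, F₁ b = ⊥)
    (h₂top : ∃ a : ℤ, F₂ a = ⊤) (h₂bot : ∃ b : ℤ, F₂ b = ⊥) :
    ∃ W : ℤ × ℤ → Submodule k V,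
      DirectSum.IsInternal W ∧
        (∀ p : ℤ, F₁ p = ⨆ (a : ℤ) (_ : p ≤ a), ⨆ q : ℤ, W (a, q)) ∧
        (∀ q : ℤ, F₂ q = ⨆ (b : ℤ) (_ : q ≤ b), ⨆ p : ℤ, W (p, b)) := by
  classical
  obtain ⟨a₁, ha₁⟩ := h₁top
  obtain ⟨b₁, hb₁⟩ := h₁bot
  obtain ⟨a₂, ha₂⟩ := h₂top
  obtain ⟨b₂, hb₂⟩ := h₂bot
  -- relative complements exist in the lattice of subspaces
  have relcompl : ∀ U T : Submodule k V, U ≤ T →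
      ∃ Wc : Submodule k V, Wc ≤ T ∧ Disjoint Wc U ∧ Wc ⊔ U = T := by
    intro U T hUT
    obtain ⟨W', hW'⟩ := ComplementedLattice.exists_isCompl (Submodule.comap T.subtype U)
    have hU : Submodule.map T.subtype (Submodule.comap T.subtype U) = U := by
      rw [Submodule.map_comap_subtype, inf_eq_right.mpr hUT]
    refine ⟨Submodule.map T.subtype W', Submodule.map_subtype_le T W', ?_, ?_⟩
    · rw [disjoint_iff, ← hU,
        ← Submodule.map_inf _ (Submodule.injective_subtype T), hW'.symm.inf_eq_bot,
        Submodule.map_bot]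
    · rw [← hU, ← Submodule.map_sup, sup_comm, hW'.sup_eq_top, Submodule.map_top,
        Submodule.range_subtype]
  have key : ∀ p q : ℤ, ∃ Wpq : Submodule k V, Wpq ≤ F₁ p ⊓ F₂ q ∧
      Disjoint Wpq ((F₁ (p + 1) ⊓ F₂ q) ⊔ (F₁ p ⊓ F₂ (q + 1))) ∧
      Wpq ⊔ ((F₁ (p + 1) ⊓ F₂ q) ⊔ (F₁ p ⊓ F₂ (q + 1))) = F₁ p ⊓ F₂ q := by
    intro p q
    refine relcompl _ _ (sup_le ?_ ?_)
    · exact inf_le_inf_right _ (h₁ p (p + 1) (by omega))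
    · exact inf_le_inf_left _ (h₂ q (q + 1) (by omega))
  choose W hWle hWdisj hWsup using key
  have hW1 : ∀ p q, W p q ≤ F₁ p := fun p q => (hWle p q).trans inf_le_left
  have hW2 : ∀ p q, W p q ≤ F₂ q := fun p q => (hWle p q).trans inf_le_right
  have hbot1' : ∀ p, b₁ ≤ p → F₁ p = ⊥ := fun p hp => le_bot_iff.1 (hb₁ ▸ h₁ b₁ p hp)
  have hbot2' : ∀ q, b₂ ≤ q → F₂ q = ⊥ := fun q hq => le_bot_iff.1 (hb₂ ▸ h₂ b₂ q hq)
  have htop1' : ∀ p, p ≤ a₁ → F₁ p = ⊤ := fun p hp => eq_top_iff.2 (ha₁ ▸ h₁ p a₁ hp)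
  have htop2' : ∀ q, q ≤ a₂ → F₂ q = ⊤ := fun q hq => eq_top_iff.2 (ha₂ ▸ h₂ q a₂ hq)
  -- the graded pieces
  set D : ℤ → ℤ → Submodule k V :=
    fun p q => ⨆ a, ⨆ (_ : p ≤ a), ⨆ b, ⨆ (_ : q ≤ b), W a b with hDdef
  have hWD : ∀ {p q a b : ℤ}, p ≤ a → q ≤ b → W a b ≤ D p q := by
    intro p q a b hpa hqb
    exact le_iSup_of_le a (le_iSup_of_le hpa (le_iSup_of_le b (le_iSup_of_le hqb le_rfl)))
  have hDle : ∀ p q, D p q ≤ F₁ p ⊓ F₂ q := by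
    intro p q
    refine iSup_le fun a => iSup_le fun hpa => iSup_le fun b => iSup_le fun hqb => ?_
    exact le_inf ((hW1 a b).trans (h₁ p a hpa)) ((hW2 a b).trans (h₂ q b hqb))
  have hDmono : ∀ {p q p' q' : ℤ}, p ≤ p' → q ≤ q' → D p' q' ≤ D p q := by
    intro p q p' q' hp hq
    refine iSup_le fun a => iSup_le fun h1 => iSup_le fun b => iSup_le fun h2 => ?_
    exact hWD (hp.trans h1) (hq.trans h2)
  have claimA : ∀ n : ℕ, ∀ p q : ℤ, b₁ - p + (b₂ - q) ≤ (n : ℤ) → F₁ p ⊓ F₂ q ≤ D p q := by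
    intro n
    induction n with
    | zero =>
      intro p q hn
      rcases le_or_gt b₁ p with hp | hp
      · rw [hbot1' p hp]; exact inf_le_left.trans bot_le
      rcases le_or_gt b₂ q with hq | hq
      · rw [hbot2' q hq]; exact inf_le_right.trans bot_le
      omega
    | succ n ih =>
      intro p q hn
      rcases le_or_gt b₁ p with hp | hp
      · rw [hbot1' p hp]; exact inf_le_left.trans bot_le
      rcases le_or_gt b₂ q with hq | hq
      · rw [hbot2' q hq]; exact inf_le_right.trans bot_le
      rw [← hWsup p q]
      refine sup_le (hWD le_rfl le_rfl) (sup_le ?_ ?_)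
      · exact (ih (p + 1) q (by omega)).trans (hDmono (by omega) le_rfl)
      · exact (ih p (q + 1) (by omega)).trans (hDmono le_rfl (by omega))
  have hG : ∀ p q : ℤ, F₁ p ⊓ F₂ q = D p q := fun p q =>
    le_antisymm (claimA (b₁ - p + (b₂ - q)).toNat p q (Int.self_le_toNat _)) (hDle p q)
  refine ⟨fun i => W i.1 i.2, ?_, ?_, ?_⟩
  · -- internality
    rw [DirectSum.isInternal_submodule_iff_iSupIndep_and_iSup_eq_top]
    constructor
    · rw [iSupIndep_iff_dfinsupp_lsum_injective, injective_iff_map_eq_zero]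
      intro f hf
      have hsum : ∑ i ∈ f.support, ((f i : V)) = 0 := by
        rw [← hf]
        simp [DFinsupp.lsum_apply_apply, DFinsupp.sumAddHom_apply, DFinsupp.sum]
      by_contra hne
      have hs : f.support.Nonempty := by
        rwa [Finset.nonempty_iff_ne_empty, ne_eq, DFinsupp.support_eq_empty]
      set s := f.support with hsdef
      have hP : (s.image Prod.fst).Nonempty := hs.image _
      set p := (s.image Prod.fst).min' hP with hpdef
      have ht : (s.filter (fun i => i.1 = p)).Nonempty := by
        obtain ⟨i, hi, hip⟩ := Finset.mem_image.1 ((s.image Prod.fst).min'_mem hP)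
        exact ⟨i, Finset.mem_filter.2 ⟨hi, hip⟩⟩
      have hQ : ((s.filter (fun i => i.1 = p)).image Prod.snd).Nonempty := ht.image _
      set q := ((s.filter (fun i => i.1 = p)).image Prod.snd).min' hQ with hqdef
      have hpq : (p, q) ∈ s := by
        have hm := Finset.min'_mem _ hQ
        obtain ⟨i, hi, hiq⟩ := Finset.mem_image.1 hm
        obtain ⟨his, hip⟩ := Finset.mem_filter.1 hi
        have : i = (p, q) := Prod.ext hip hiq
        rwa [← this]
      have hp_le : ∀ i ∈ s, p ≤ i.1 := fun i hi =>
        Finset.min'_le _ _ (Finset.mem_image_of_mem _ hi)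
      have hq_le : ∀ i ∈ s, i.1 = p → q ≤ i.2 := fun i hi h =>
        Finset.min'_le _ _ (Finset.mem_image_of_mem _ (Finset.mem_filter.2 ⟨hi, h⟩))
      have hsum2 : ((f (p, q) : V)) + ∑ i ∈ s.erase (p, q), ((f i : V)) = 0 := by
        rw [Finset.add_sum_erase s (fun i => ((f i : V))) hpq, hsum]
      set A := (s.erase (p, q)).filter (fun i => p < i.1) with hAdef
      set B := (s.erase (p, q)).filter (fun i => ¬ p < i.1) with hBdef
      have h0 : ((f (p, q) : V)) + (∑ i ∈ A, ((f i : V)) + ∑ i ∈ B, ((f i : V))) = 0 := by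
        rw [Finset.sum_filter_add_sum_filter_not]; exact hsum2
      have hA : ∑ i ∈ A, ((f i : V)) ∈ F₁ (p + 1) := by
        refine Submodule.sum_mem _ fun i hi => ?_
        obtain ⟨hi', hlt⟩ := Finset.mem_filter.1 hi
        exact h₁ (p + 1) i.1 (by omega) (hW1 i.1 i.2 (f i).2)
      have hB : ∑ i ∈ B, ((f i : V)) ∈ F₁ p ⊓ F₂ (q + 1) := by
        refine Submodule.sum_mem _ fun i hi => ?_
        obtain ⟨hi', hnp⟩ := Finset.mem_filter.1 hi
        have his : i ∈ s := Finset.mem_of_mem_erase hi'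
        have hip : i.1 = p := le_antisymm (not_lt.1 hnp) (hp_le i his)
        have hqi : q ≤ i.2 := hq_le i his hip
        have hq2 : q + 1 ≤ i.2 := by
          rcases lt_or_eq_of_le hqi with h | h
          · omega
          · exact absurd (Prod.ext hip h.symm) (Finset.ne_of_mem_erase hi')
        refine Submodule.mem_inf.2 ⟨?_, ?_⟩
        · exact hip ▸ hW1 i.1 i.2 (f i).2
        · exact h₂ (q + 1) i.2 hq2 (hW2 i.1 i.2 (f i).2)
      have hx2 : ((f (p, q) : V)) ∈ F₂ q := hW2 p q (f (p, q)).2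
      have hAq : ∑ i ∈ A, ((f i : V)) ∈ F₂ q := by
        have hSA : ∑ i ∈ A, ((f i : V)) =
            -(((f (p, q) : V)) + ∑ i ∈ B, ((f i : V))) := by
          rw [eq_neg_iff_add_eq_zero]
          calc (∑ i ∈ A, ((f i : V))) + (((f (p, q) : V)) + ∑ i ∈ B, ((f i : V)))
              = ((f (p, q) : V)) + (∑ i ∈ A, ((f i : V)) + ∑ i ∈ B, ((f i : V))) := by abel
            _ = 0 := h0
        rw [hSA]
        exact neg_mem (add_mem hx2 (h₂ q (q + 1) (by omega) (Submodule.mem_inf.1 hB).2))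
      have hxU : ((f (p, q) : V)) ∈ (F₁ (p + 1) ⊓ F₂ q) ⊔ (F₁ p ⊓ F₂ (q + 1)) := by
        have hx : ((f (p, q) : V)) = -(∑ i ∈ A, ((f i : V)) + ∑ i ∈ B, ((f i : V))) :=
          eq_neg_of_add_eq_zero_left h0
        rw [hx]
        exact neg_mem (add_mem (Submodule.mem_sup_left (Submodule.mem_inf.2 ⟨hA, hAq⟩))
          (Submodule.mem_sup_right hB))
      have hx0 : ((f (p, q) : V)) = 0 :=
        Submodule.disjoint_def.1 (hWdisj p q) _ (f (p, q)).2 hxU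
      exact DFinsupp.mem_support_iff.1 hpq (Subtype.ext hx0)
    · rw [eq_top_iff, ← ha₁]
      calc F₁ a₁ = F₁ a₁ ⊓ F₂ a₂ := by rw [ha₂, inf_top_eq]
        _ = D a₁ a₂ := hG _ _
        _ ≤ ⨆ i : ℤ × ℤ, W i.1 i.2 :=
            iSup_le fun a => iSup_le fun _ => iSup_le fun b => iSup_le fun _ =>
              le_iSup_of_le (a, b) le_rfl
  · intro p
    refine le_antisymm ?_ ?_
    · have hp : F₁ p = F₁ p ⊓ F₂ a₂ := by rw [ha₂, inf_top_eq]
      rw [hp, hG]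
      refine iSup_le fun a => iSup_le fun hpa => iSup_le fun b => iSup_le fun _ => ?_
      exact le_iSup_of_le a (le_iSup_of_le hpa (le_iSup_of_le b le_rfl))
    · refine iSup_le fun a => iSup_le fun hpa => iSup_le fun b => ?_
      exact (hW1 a b).trans (h₁ p a hpa)
  · intro q
    refine le_antisymm ?_ ?_
    · have hq : F₂ q = F₁ a₁ ⊓ F₂ q := by rw [ha₁, top_inf_eq]
      rw [hq, hG]
      refine iSup_le fun a => iSup_le fun _ => iSup_le fun b => iSup_le fun hqb => ?_
      exact le_iSup_of_le b (le_iSup_of_le hqb (le_iSup_of_le a le_rfl))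
    · refine iSup_le fun b => iSup_le fun hqb => iSup_le fun a => ?_
      exact (hW2 a b).trans (h₂ q b hqb)
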